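/- Let (Ω, 𝓕, P) be a probability space and let B = (B_t)_{t∈[0,1]} be a standard Brownian motion on it: B₀ = 0 almost surely, B has almost surely continuous sample paths, B has independent increments, and for 0 ≤ s ≤ t ≤ 1 the increment B_t − B_s is Gaussian with mean 0 and variance t − s. Fix τ > 0 and u ∈ [0,1], and define f^u(t) := (u − |u − t|)/2 and Y(t) := t·τ/8 + (√τ/(2√2))·B_t for t ∈ [0,1]. Then for every bounded Borel-measurable functional G on the space C([0,1], ℝ) of continuous real-valued functions on [0,1] (with the uniform norm), E[ G(Y) · exp( (u − 1)·τ/4 + (√τ/√2)·(B_u − B_1) ) ] = E[ G( (τ/4)·f^u + (√τ/(2√2))·B ) ]. -/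

import Mathlib

open Set MeasureTheory ProbabilityTheory
open scoped Classical
open scoped ENNReal NNReal

/-- Evaluate a functional `G` on the space `C([0,1], ℝ)` at the restriction of a
path `p : ℝ → ℝ` to `[0,1]`, returning `0` if this restriction is not continuous. -/
noncomputable def pathEval (G : C(Set.Icc (0:ℝ) 1, ℝ) → ℝ) (p : ℝ → ℝ) : ℝ :=
  if h : Continuous (fun t : Set.Icc (0:ℝ) 1 => p t) then G ⟨_, h⟩ else 0

lemma gt_aux_gauss_tilt (v : ℝ≥0) (θ : ℝ) {A : Set ℝ} (hA : MeasurableSet A) :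
    ∫⁻ x in A, ENNReal.ofReal (Real.exp (-(θ * x) - θ^2 * v / 2)) ∂(gaussianReal 0 v)
      = gaussianReal (-(θ * v)) v A := by
  by_cases hv : v = 0
  · subst hv
    simp only [NNReal.coe_zero, mul_zero, zero_div, sub_zero, neg_zero,
      gaussianReal_zero_var]
    rw [setLIntegral_dirac (fun x => ENNReal.ofReal (Real.exp (-(θ * x)))) A,
      Measure.dirac_apply' _ hA]
    by_cases h0 : (0:ℝ) ∈ A <;> simp [h0, Set.indicator]
  · have hvpos : (0:ℝ) < (v:ℝ) := by positivity
    rw [gaussianReal_of_var_ne_zero _ hv, gaussianReal_of_var_ne_zero _ hv,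
      withDensity_apply _ hA, MeasureTheory.restrict_withDensity hA _,
      lintegral_withDensity_eq_lintegral_mul _ (measurable_gaussianPDF _ _)
        (by fun_prop)]
    refine setLIntegral_congr_fun hA (fun x _ => ?_)
    simp only [Pi.mul_apply, gaussianPDF,
      ← ENNReal.ofReal_mul (gaussianPDFReal_nonneg 0 v x)]
    congr 1
    simp only [gaussianPDFReal, sub_zero, mul_assoc, ← Real.exp_add]
    congr 1
    have hvne : (v:ℝ) ≠ 0 := ne_of_gt hvpos
    field_simp
    ring

lemma gt_aux_lintegral_pi_prod : ∀ {m : ℕ} (ν : Fin m → Measure ℝ),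
    (∀ i, IsProbabilityMeasure (ν i)) → ∀ (f : Fin m → ℝ → ℝ≥0∞),
    (∀ i, Measurable (f i)) →
    ∫⁻ x, ∏ i, f i (x i) ∂Measure.pi ν = ∏ i, ∫⁻ t, f i t ∂(ν i) := by
  intro m
  induction m with
  | zero =>
      intro ν hν f hf
      haveI := hν
      simp only [Finset.univ_eq_empty, Finset.prod_empty, lintegral_one]
      exact measure_univ
  | succ n ih =>
      intro ν hν f hf
      haveI := hν
      have hmp := measurePreserving_piFinSuccAbove ν 0
      have hFmeas : Measurable fun x : Fin (n+1) → ℝ => ∏ i, f i (x i) :=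
        Finset.measurable_prod _ fun i _ => (hf i).comp (measurable_pi_apply i)
      rw [← MeasurePreserving.lintegral_comp hmp.symm hFmeas]
      have hcomp : ∀ y : ℝ × (Fin n → ℝ),
          (∏ i, f i ((MeasurableEquiv.piFinSuccAbove (fun _ => ℝ) 0).symm y i))
          = f 0 y.1 * ∏ i : Fin n, f i.succ (y.2 i) := by
        intro y
        rw [Fin.prod_univ_succ]
        simp [MeasurableEquiv.piFinSuccAbove_symm_apply, Fin.insertNth_zero,
          Fin.cons_succ]
      simp only [hcomp]
      rw [lintegral_prod_mul (μ := ν 0)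
        (ν := Measure.pi fun j => ν (Fin.succAbove 0 j))
        (f := f 0) (g := fun z : Fin n → ℝ => ∏ i : Fin n, f i.succ (z i))
        ((hf 0).aemeasurable)
        ((Finset.measurable_prod _ fun i _ =>
          (hf i.succ).comp (measurable_pi_apply i)).aemeasurable)]
      rw [Fin.prod_univ_succ]
      congr 1
      have := ih (fun i => ν (Fin.succAbove 0 i)) (fun i => hν _)
        (fun i => f (Fin.succAbove 0 i)) (fun i => hf _)
      simpa [Fin.zero_succAbove] using this

lemma gt_aux_map_eq_pi {Ω : Type*} [MeasurableSpace Ω] (P : Measure Ω)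
    [IsProbabilityMeasure P] {m : ℕ} (f : Fin m → Ω → ℝ)
    (hmeas : ∀ i, Measurable (f i))
    (hindep : iIndepFun (m := fun _ : Fin m => (inferInstance : MeasurableSpace ℝ)) f P) :
    P.map (fun ω i => f i ω) = Measure.pi (fun i => P.map (f i)) := by
  haveI : ∀ i, IsProbabilityMeasure (P.map (f i)) :=
    fun i => Measure.isProbabilityMeasure_map (hmeas i).aemeasurable
  refine (Measure.pi_eq fun s hs => ?_).symm
  rw [Measure.map_apply (measurable_pi_lambda _ hmeas) (MeasurableSet.univ_pi hs)]
  have hpre : (fun ω i => f i ω) ⁻¹' (Set.pi univ s) = ⋂ i ∈ Finset.univ, f i ⁻¹' s i := by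
    ext ω; simp [Set.mem_univ_pi]
  rw [hpre, hindep.measure_inter_preimage_eq_mul Finset.univ (fun i _ => hs i)]
  exact Finset.prod_congr rfl fun i _ =>
    (Measure.map_apply (hmeas i) (hs i)).symm

lemma gt_aux_pi_tilt {m : ℕ} (Δ : Fin m → ℝ≥0) (θs : Fin m → ℝ) :
    (Measure.pi fun r => gaussianReal 0 (Δ r)).withDensity
        (fun x => ∏ r, ENNReal.ofReal (Real.exp (-(θs r * x r) - (θs r)^2 * (Δ r) / 2)))
      = Measure.pi fun r => gaussianReal (-(θs r * Δ r)) (Δ r) := by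
  refine (Measure.pi_eq fun s hs => ?_).symm
  have hφmeas : ∀ r : Fin m,
      Measurable (fun x : ℝ => ENNReal.ofReal (Real.exp (-(θs r * x) - (θs r)^2 * (Δ r) / 2))) :=
    fun r => by fun_prop
  rw [withDensity_apply _ (MeasurableSet.univ_pi hs)]
  rw [← lintegral_indicator (MeasurableSet.univ_pi hs)]
  have hind : ∀ x : Fin m → ℝ,
      (Set.pi univ s).indicator
        (fun x => ∏ r, ENNReal.ofReal (Real.exp (-(θs r * x r) - (θs r)^2 * (Δ r) / 2))) x
      = ∏ r, (s r).indicator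
          (fun y => ENNReal.ofReal (Real.exp (-(θs r * y) - (θs r)^2 * (Δ r) / 2))) (x r) := by
    intro x
    by_cases hx : x ∈ Set.pi univ s
    · rw [Set.indicator_of_mem hx]
      exact Finset.prod_congr rfl fun r _ =>
        (Set.indicator_of_mem (hx r trivial)
          (fun y => ENNReal.ofReal (Real.exp (-(θs r * y) - (θs r)^2 * (Δ r) / 2)))).symm
    · rw [Set.indicator_of_notMem hx]
      have : ∃ r, x r ∉ s r := by
        by_contra h
        push_neg at h
        exact hx fun r _ => h r
      obtain ⟨r, hr⟩ := this
      exact (Finset.prod_eq_zero (Finset.mem_univ r)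
        (Set.indicator_of_notMem hr _)).symm
  simp only [hind]
  rw [gt_aux_lintegral_pi_prod _ (fun r => inferInstance) _
    (fun r => (hφmeas r).indicator (hs r))]
  refine Finset.prod_congr rfl fun r _ => ?_
  rw [lintegral_indicator (hs r)]
  exact gt_aux_gauss_tilt (Δ r) (θs r) (hs r)

lemma gt_aux_fin_telescope {m : ℕ} (g : Fin (m+1) → ℝ) (q p : Fin (m+1)) (hqp : q ≤ p) :
    ∑ r : Fin m, (if q ≤ r.castSucc ∧ r.succ ≤ p then g r.succ - g r.castSucc else 0)
      = g p - g q := by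
  set G : ℕ → ℝ := fun n => g ⟨min n m, by omega⟩ with hG
  have hGp : ∀ i : Fin (m+1), g i = G i.val := by
    intro i
    have : min i.val m = i.val := min_eq_left (by omega)
    simp [hG, this, Fin.eta]
  have hstep : ∀ i : Fin m,
      (if q ≤ i.castSucc ∧ i.succ ≤ p then g i.succ - g i.castSucc else 0)
        = (fun n : ℕ => if q.val ≤ n ∧ n + 1 ≤ p.val then G (n+1) - G n else 0) i.val := by
    intro i
    have h1 : (q ≤ i.castSucc) = (q.val ≤ i.val) := by
      simp [Fin.le_def]
    have h2 : (i.succ ≤ p) = (i.val + 1 ≤ p.val) := by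
      simp [Fin.le_def]
    simp only [h1, h2, hGp i.succ, hGp i.castSucc, Fin.val_succ, Fin.coe_castSucc]
  rw [Finset.sum_congr rfl (fun i _ => hstep i),
    Fin.sum_univ_eq_sum_range (fun n : ℕ => if q.val ≤ n ∧ n + 1 ≤ p.val then G (n+1) - G n else 0) m]
  rw [← Finset.sum_filter]
  have hfil : (Finset.range m).filter (fun n => q.val ≤ n ∧ n + 1 ≤ p.val)
      = Finset.Ico q.val p.val := by
    ext n
    have hp : p.val ≤ m := by omega
    simp only [Finset.mem_filter, Finset.mem_range, Finset.mem_Ico]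
    omega
  rw [hfil, Finset.sum_Ico_eq_sub _ (by exact_mod_cast hqp),
    Finset.sum_range_sub G, Finset.sum_range_sub G, hGp p, hGp q]
  ring

def gtCylinders : Set (Set C(Set.Icc (0:ℝ) 1, ℝ)) :=
  {S | ∃ T : Finset (Set.Icc (0:ℝ) 1 × ℝ), S = {w | ∀ p ∈ T, w p.1 ≤ p.2}}

lemma gt_isPiSystem : IsPiSystem gtCylinders := by
  rintro S₁ ⟨T₁, rfl⟩ S₂ ⟨T₂, rfl⟩ -
  exact ⟨T₁ ∪ T₂, by ext w; simp [Finset.mem_union, or_imp, forall_and]⟩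

lemma gt_univ_mem : (Set.univ : Set C(Set.Icc (0:ℝ) 1, ℝ)) ∈ gtCylinders :=
  ⟨∅, by simp⟩

instance : Nonempty (Set.Icc (0:ℝ) 1) := ⟨⟨0, by norm_num⟩⟩

lemma gt_borel_eq :
    borel C(Set.Icc (0:ℝ) 1, ℝ) = MeasurableSpace.generateFrom gtCylinders := by
  letI : MeasurableSpace C(Set.Icc (0:ℝ) 1, ℝ) := borel _
  haveI : BorelSpace C(Set.Icc (0:ℝ) 1, ℝ) := ⟨rfl⟩
  set gen := MeasurableSpace.generateFrom gtCylinders with hgen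
  refine le_antisymm ?_ ?_
  · -- borel ≤ generateFrom
    obtain ⟨D, hDc, hDd⟩ := TopologicalSpace.exists_countable_dense C(Set.Icc (0:ℝ) 1, ℝ)
    obtain ⟨Q, hQc, hQd⟩ := TopologicalSpace.exists_countable_dense (Set.Icc (0:ℝ) 1)
    have hOne : ∀ (r : Set.Icc (0:ℝ) 1) (a : ℝ),
        MeasurableSet[gen] {w : C(Set.Icc (0:ℝ) 1, ℝ) | w r ≤ a} := fun r a =>
      MeasurableSpace.measurableSet_generateFrom ⟨{(r, a)}, by ext w; simp⟩
    have hLt : ∀ (r : Set.Icc (0:ℝ) 1) (a : ℝ),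
        MeasurableSet[gen] {w : C(Set.Icc (0:ℝ) 1, ℝ) | w r < a} := by
      intro r a
      have : {w : C(Set.Icc (0:ℝ) 1, ℝ) | w r < a} = ⋃ n : ℕ, {w : C(Set.Icc (0:ℝ) 1, ℝ) | w r ≤ a - ((n:ℝ)+1)⁻¹} := by
        ext w
        simp only [Set.mem_setOf_eq, Set.mem_iUnion]
        constructor
        · intro h
          obtain ⟨n, hn⟩ := exists_nat_one_div_lt (sub_pos.mpr h)
          exact ⟨n, by rw [one_div] at hn; linarith⟩
        · rintro ⟨n, hn⟩
          have : (0:ℝ) < ((n:ℝ)+1)⁻¹ := by positivity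
          linarith
      rw [this]
      exact MeasurableSet.iUnion fun n => hOne r _
    have hGe : ∀ (r : Set.Icc (0:ℝ) 1) (a : ℝ),
        MeasurableSet[gen] {w : C(Set.Icc (0:ℝ) 1, ℝ) | a ≤ w r} := by
      intro r a
      have : {w : C(Set.Icc (0:ℝ) 1, ℝ) | a ≤ w r} = {w : C(Set.Icc (0:ℝ) 1, ℝ) | w r < a}ᶜ := by
        ext w; simp [not_lt]
      rw [this]
      exact (hLt r a).compl
    have hCB : ∀ (f : C(Set.Icc (0:ℝ) 1, ℝ)) (c : ℝ), MeasurableSet[gen] {w : C(Set.Icc (0:ℝ) 1, ℝ) | dist w f ≤ c} := by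
      intro f c
      have heq : {w : C(Set.Icc (0:ℝ) 1, ℝ) | dist w f ≤ c}
          = ⋂ r ∈ Q, ({w : C(Set.Icc (0:ℝ) 1, ℝ) | w r ≤ f r + c} ∩ {w : C(Set.Icc (0:ℝ) 1, ℝ) | f r - c ≤ w r}) := by
        ext w
        simp only [Set.mem_setOf_eq, Set.mem_iInter, Set.mem_inter_iff]
        constructor
        · intro h r _
          have := (ContinuousMap.dist_le_iff_of_nonempty.mp h) r
          rw [Real.dist_eq, abs_le] at this
          constructor <;> linarith [this.1, this.2]
        · intro h
          refine ContinuousMap.dist_le_iff_of_nonempty.mpr fun x => ?_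
          have hK : IsClosed {x : Set.Icc (0:ℝ) 1 | dist (w x) (f x) ≤ c} :=
            isClosed_le (by fun_prop) continuous_const
          have hQK : Q ⊆ {x : Set.Icc (0:ℝ) 1 | dist (w x) (f x) ≤ c} := by
            intro r hr
            have := h r hr
            rw [Set.mem_setOf_eq, Real.dist_eq, abs_le]
            constructor <;> linarith [this.1, this.2]
          have : closure Q ⊆ {x : Set.Icc (0:ℝ) 1 | dist (w x) (f x) ≤ c} :=
            closure_minimal hQK hK
          exact this (by rw [hQd.closure_eq]; trivial)
      rw [heq]
      exact MeasurableSet.biInter hQc fun r _ => (hOne r _).inter (hGe r _)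
    have hBall : ∀ (f : C(Set.Icc (0:ℝ) 1, ℝ)) (c : ℝ), MeasurableSet[gen] (Metric.ball f c) := by
      intro f c
      have : Metric.ball f c = ⋃ n : ℕ, {w : C(Set.Icc (0:ℝ) 1, ℝ) | dist w f ≤ c - ((n:ℝ)+1)⁻¹} := by
        ext w
        simp only [Metric.mem_ball, Set.mem_iUnion, Set.mem_setOf_eq]
        constructor
        · intro h
          obtain ⟨n, hn⟩ := exists_nat_one_div_lt (sub_pos.mpr h)
          exact ⟨n, by rw [one_div] at hn; linarith⟩
        · rintro ⟨n, hn⟩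
          have : (0:ℝ) < ((n:ℝ)+1)⁻¹ := by positivity
          linarith
      rw [this]
      exact MeasurableSet.iUnion fun n => hCB f _
    rw [borel]
    refine MeasurableSpace.generateFrom_le fun U hU => ?_
    set I : Set (C(Set.Icc (0:ℝ) 1, ℝ) × ℚ) := {p | p.1 ∈ D ∧ Metric.ball p.1 (p.2:ℝ) ⊆ U} with hI
    have hVc : Set.Countable ((fun p : C(Set.Icc (0:ℝ) 1, ℝ) × ℚ => Metric.ball p.1 (p.2:ℝ)) '' I) :=
      ((hDc.prod (Set.countable_univ)).mono (fun p hp => by exact ⟨hp.1, trivial⟩)).image _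
    have hUeq : U = ⋃₀ ((fun p : C(Set.Icc (0:ℝ) 1, ℝ) × ℚ => Metric.ball p.1 (p.2:ℝ)) '' I) := by
      apply Set.Subset.antisymm
      · intro x hx
        have hU' : IsOpen U := hU
        obtain ⟨ε, hε, hball⟩ := Metric.isOpen_iff.mp hU' x hx
        obtain ⟨f, hfD, hdf⟩ := hDd.exists_dist_lt x (by positivity : (0:ℝ) < ε/3)
        obtain ⟨q, hq1, hq2⟩ := exists_rat_btwn hdf
        refine ⟨Metric.ball f (q:ℝ), ⟨(f, q), ⟨hfD, fun y hy => hball ?_⟩, rfl⟩, ?_⟩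
        · rw [Metric.mem_ball] at hy ⊢
          have hdfx : dist f x < (q:ℝ) := by rwa [dist_comm]
          calc dist y x ≤ dist y f + dist f x := dist_triangle y f x
            _ < (q:ℝ) + (q:ℝ) := by linarith
            _ < ε := by linarith
        · rw [Metric.mem_ball]; exact hq1
      · rintro y ⟨V, ⟨p, hp, rfl⟩, hyV⟩
        exact hp.2 hyV
    rw [hUeq]
    exact MeasurableSet.sUnion hVc fun V ⟨p, hp, hVeq⟩ => hVeq ▸ hBall p.1 p.2
  · rw [borel]
    refine MeasurableSpace.generateFrom_le ?_
    rintro S ⟨T, rfl⟩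
    have : IsClosed {w : C(Set.Icc (0:ℝ) 1, ℝ) | ∀ p ∈ T, w p.1 ≤ p.2} := by
      have : {w : C(Set.Icc (0:ℝ) 1, ℝ) | ∀ p ∈ T, w p.1 ≤ p.2} = ⋂ p ∈ T, {w : C(Set.Icc (0:ℝ) 1, ℝ) | w p.1 ≤ p.2} := by
        ext w; simp
      rw [this]
      exact isClosed_biInter fun p _ =>
        isClosed_le (continuous_eval_const p.1) continuous_const
    have h2 : MeasurableSet[MeasurableSpace.generateFrom {s : Set C(Set.Icc (0:ℝ) 1, ℝ) | IsOpen s}]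
        {w : C(Set.Icc (0:ℝ) 1, ℝ) | ∀ p ∈ T, w p.1 ≤ p.2}ᶜ :=
      MeasurableSpace.measurableSet_generateFrom this.isOpen_compl
    simpa using h2.compl

lemma gt_core {Ω : Type*} [MeasurableSpace Ω] (P : Measure Ω) [IsProbabilityMeasure P]
    (B : ℝ → Ω → ℝ)
    (hBmeas : ∀ t ∈ Icc (0:ℝ) 1, Measurable (B t))
    (hB0 : ∀ᵐ ω ∂P, B 0 ω = 0)
    (hBindep : ∀ (n : ℕ) (t : Fin (n+1) → ℝ), Monotone t →
      (∀ i, t i ∈ Icc (0:ℝ) 1) →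
      iIndepFun (m := fun _ : Fin n => (inferInstance : MeasurableSpace ℝ))
        (fun i ω => B (t i.succ) ω - B (t i.castSucc) ω) P)
    (hBgauss : ∀ s t : ℝ, 0 ≤ s → s ≤ t → t ≤ 1 →
      P.map (fun ω => B t ω - B s ω) = gaussianReal 0 (Real.toNNReal (t - s)))
    (θ : ℝ) (u : ℝ) (hu : u ∈ Icc (0:ℝ) 1)
    (k : ℕ) (t : Fin k → Set.Icc (0:ℝ) 1) (b : Fin k → ℝ) :
    ∫⁻ ω, ({ω : Ω | ∀ i, B (t i) ω ≤ b i}).indicator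
        (fun ω => ENNReal.ofReal (Real.exp (-(θ * (B 1 ω - B u ω)) - θ^2 * (1-u)/2))) ω ∂P
      = P {ω : Ω | ∀ i, B (t i) ω ≤ b i + θ * max ((t i : ℝ) - u) 0} := by
  classical
  -- the sorted grid
  set L : List ℝ := 0 :: u :: 1 :: List.ofFn (fun i => (t i : ℝ)) with hL
  set l : List ℝ := L.mergeSort (· ≤ ·) with hl
  have hlen : l.length = (k + 2) + 1 := by
    simp [hl, hL, List.length_mergeSort]
  set m := k + 2 with hm
  set s : Fin (m+1) → ℝ := fun i => l.get (Fin.cast hlen.symm i) with hs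
  have hsorted : l.Pairwise (· ≤ ·) := List.pairwise_mergeSort' (· ≤ ·) L
  have hsmono : Monotone s := by
    intro i i' h
    refine hsorted.rel_get_of_le ?_
    rw [Fin.le_def] at h ⊢
    simpa using h
  have hmemL : ∀ x ∈ L, ∃ i : Fin (m+1), s i = x := by
    intro x hx
    have hxl : x ∈ l := by rw [hl, List.mem_mergeSort]; exact hx
    obtain ⟨n, hn⟩ := List.get_of_mem hxl
    have hn1 : (n : ℕ) < m + 1 := by have := n.2; omega
    exact ⟨⟨n.1, hn1⟩, (congrArg l.get (Fin.ext rfl)).trans hn⟩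
  have hrange : ∀ i, s i ∈ Set.Icc (0:ℝ) 1 := by
    intro i
    have hmem : s i ∈ L := by
      rw [← List.mem_mergeSort (le := (· ≤ ·)), ← hl]
      exact List.get_mem l _
    simp only [hL, List.mem_cons, List.mem_ofFn] at hmem
    rcases hmem with h | h | h | ⟨j, hj⟩
    · rw [h]; exact ⟨le_rfl, zero_le_one⟩
    · rw [h]; exact hu
    · rw [h]; exact ⟨zero_le_one, le_rfl⟩
    · rw [← hj]; exact (t j).2
  obtain ⟨ju, hju⟩ := hmemL u (by simp [hL])
  have hσ : ∀ i : Fin k, ∃ p : Fin (m+1), s p = (t i : ℝ) := fun i =>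
    hmemL (t i) (by
      simp only [hL, List.mem_cons, List.mem_ofFn]
      exact Or.inr (Or.inr (Or.inr ⟨i, rfl⟩)))
  choose σ hσeq using hσ
  have hs0 : s 0 = 0 := by
    obtain ⟨i0, hi0⟩ := hmemL 0 (by simp [hL])
    exact le_antisymm (hi0 ▸ hsmono (Fin.zero_le i0)) (hrange 0).1
  have hsl : s (Fin.last m) = 1 := by
    obtain ⟨i1, hi1⟩ := hmemL 1 (by simp [hL])
    exact le_antisymm (hrange _).2 (hi1 ▸ hsmono (Fin.le_last i1))
  -- increments
  set X : Fin m → Ω → ℝ := fun r ω => B (s r.succ) ω - B (s r.castSucc) ω with hX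
  have hXmeas : ∀ r, Measurable (X r) := fun r =>
    (hBmeas _ (hrange r.succ)).sub (hBmeas _ (hrange r.castSucc))
  set Δ : Fin m → ℝ≥0 := fun r => Real.toNNReal (s r.succ - s r.castSucc) with hΔ
  have hΔcoe : ∀ r, (Δ r : ℝ) = s r.succ - s r.castSucc := fun r =>
    Real.coe_toNNReal _ (sub_nonneg.mpr (hsmono (Fin.castSucc_le_succ r)))
  have hXlaw : ∀ r, P.map (X r) = gaussianReal 0 (Δ r) := fun r =>
    hBgauss _ _ (hrange r.castSucc).1 (hsmono (Fin.castSucc_le_succ r)) (hrange r.succ).2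
  have hindep := hBindep m s hsmono (fun i => hrange i)
  set V : Ω → (Fin m → ℝ) := fun ω r => X r ω with hV
  have hVmeas : Measurable V := measurable_pi_lambda _ hXmeas
  have hVlaw : P.map V = Measure.pi (fun r => gaussianReal 0 (Δ r)) := by
    rw [show (Measure.pi (fun r => gaussianReal 0 (Δ r)))
        = Measure.pi (fun r => P.map (X r)) by congr 1; funext r; rw [hXlaw r]]
    exact gt_aux_map_eq_pi P X hXmeas hindep
  -- tilt coefficients
  set θs : Fin m → ℝ := fun r => if ju ≤ r.castSucc then θ else 0 with hθs
  set δ : Fin m → ℝ := fun r => θs r * (Δ r : ℝ) with hδ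
  -- exponent identity
  have hexp : ∀ ω, -(θ * (B 1 ω - B u ω)) - θ^2 * (1-u)/2
      = ∑ r, (-(θs r * (V ω r)) - (θs r)^2 * ((Δ r : ℝ))/2) := by
    intro ω
    have hBdiff := gt_aux_fin_telescope (fun i => B (s i) ω) ju (Fin.last m) (Fin.le_last ju)
    have h1u := gt_aux_fin_telescope s ju (Fin.last m) (Fin.le_last ju)
    simp only [hsl, hju] at hBdiff h1u
    have hterm : ∀ r : Fin m, -(θs r * (V ω r)) - (θs r)^2 * ((Δ r : ℝ))/2
        = (-θ) * (if ju ≤ r.castSucc ∧ r.succ ≤ Fin.last m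
              then B (s r.succ) ω - B (s r.castSucc) ω else 0)
          + (-(θ^2)/2) * (if ju ≤ r.castSucc ∧ r.succ ≤ Fin.last m
              then s r.succ - s r.castSucc else 0) := by
      intro r
      by_cases h : ju ≤ r.castSucc
      · simp only [hθs, hV, hX, if_pos h, h, true_and, Fin.le_last, if_pos, hΔcoe r]
        ring
      · simp [hθs, hV, hX, h]
    rw [Finset.sum_congr rfl (fun r _ => hterm r), Finset.sum_add_distrib,
      ← Finset.mul_sum, ← Finset.mul_sum, hBdiff, h1u]
    ring
  -- the events in coordinates
  set A : Set (Fin m → ℝ) :=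
    ⋂ i : Fin k, {x | (∑ r, if r.succ ≤ σ i then x r else 0) ≤ b i} with hA
  have hAmeas : MeasurableSet A := by
    refine MeasurableSet.iInter fun i => measurableSet_le ?_ measurable_const
    refine Finset.measurable_sum _ fun r _ => ?_
    by_cases h : r.succ ≤ σ i
    · simpa [h] using measurable_pi_apply r
    · simp [h]
  -- partial sums of the path
  have hpath : ∀ ω, B 0 ω = 0 → ∀ i : Fin k,
      B (t i) ω = ∑ r, (if r.succ ≤ σ i then V ω r else 0) := by
    intro ω h0 i
    have htel := gt_aux_fin_telescope (fun p => B (s p) ω) 0 (σ i) (Fin.zero_le _)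
    simp only [hσeq i, hs0, h0, sub_zero] at htel
    rw [← htel]
    refine Finset.sum_congr rfl fun r _ => ?_
    simp [Fin.zero_le, hV, hX]
  -- partial sums of the shift
  have hδsum : ∀ i : Fin k,
      (∑ r, if r.succ ≤ σ i then δ r else 0) = θ * max ((t i : ℝ) - u) 0 := by
    intro i
    have htel := gt_aux_fin_telescope (fun p => θ * max (s p - u) 0) 0 (σ i) (Fin.zero_le _)
    simp only [hσeq i, hs0] at htel
    have h0u : max (0 - u) 0 = 0 := max_eq_right (by linarith [hu.1])
    rw [h0u, mul_zero, sub_zero] at htel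
    rw [← htel]
    refine Finset.sum_congr rfl fun r _ => ?_
    simp only [Fin.zero_le, true_and]
    by_cases h : r.succ ≤ σ i
    · rw [if_pos h, if_pos h]
      by_cases h2 : ju ≤ r.castSucc
      · have hcs : u ≤ s r.castSucc := hju ▸ hsmono h2
        have hss : u ≤ s r.succ := le_trans hcs (hsmono (Fin.castSucc_le_succ r))
        rw [max_eq_left (by linarith), max_eq_left (by linarith)]
        simp only [hδ, hθs, if_pos h2, hΔcoe r]
        ring
      · have h3 : r.succ ≤ ju := Fin.castSucc_lt_iff_succ_le.mp (lt_of_not_ge h2)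
        have hss : s r.succ ≤ u := hju ▸ hsmono h3
        have hcs : s r.castSucc ≤ u := le_trans (hsmono (Fin.castSucc_le_succ r)) hss
        rw [max_eq_right (by linarith), max_eq_right (by linarith)]
        simp [hδ, hθs, h2]
    · rw [if_neg h, if_neg h]
  -- density as a product over increments
  have hφmeas : ∀ r : Fin m, Measurable (fun x : ℝ =>
      ENNReal.ofReal (Real.exp (-(θs r * x) - (θs r)^2 * ((Δ r : ℝ))/2))) := fun r => by
    fun_prop
  have hdens : ∀ ω, ENNReal.ofReal (Real.exp (-(θ * (B 1 ω - B u ω)) - θ^2*(1-u)/2))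
      = ∏ r, ENNReal.ofReal (Real.exp (-(θs r * (V ω r)) - (θs r)^2 * ((Δ r : ℝ))/2)) := by
    intro ω
    rw [hexp ω, Real.exp_sum, ENNReal.ofReal_prod_of_nonneg (fun r _ => (Real.exp_pos _).le)]
  have hFmeas : Measurable (fun x : Fin m → ℝ =>
      ∏ r, ENNReal.ofReal (Real.exp (-(θs r * (x r)) - (θs r)^2 * ((Δ r : ℝ))/2))) :=
    Finset.measurable_prod _ fun r _ => (hφmeas r).comp (measurable_pi_apply r)
  -- left-hand side
  have hLHS : ∫⁻ ω, ({ω : Ω | ∀ i, B (t i) ω ≤ b i}).indicator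
        (fun ω => ENNReal.ofReal (Real.exp (-(θ * (B 1 ω - B u ω)) - θ^2 * (1-u)/2))) ω ∂P
      = ((Measure.pi fun r => gaussianReal 0 (Δ r)).withDensity (fun x =>
          ∏ r, ENNReal.ofReal (Real.exp (-(θs r * (x r)) - (θs r)^2 * ((Δ r : ℝ))/2)))) A := by
    have h1 : (fun ω => ({ω : Ω | ∀ i, B (t i) ω ≤ b i}).indicator
        (fun ω => ENNReal.ofReal (Real.exp (-(θ * (B 1 ω - B u ω)) - θ^2 * (1-u)/2))) ω)
        =ᵐ[P] fun ω => (A.indicator (fun x =>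
          ∏ r, ENNReal.ofReal (Real.exp (-(θs r * (x r)) - (θs r)^2 * ((Δ r : ℝ))/2)))) (V ω) := by
      filter_upwards [hB0] with ω h0
      have hmem : (ω ∈ {ω : Ω | ∀ i, B (t i) ω ≤ b i}) ↔ V ω ∈ A := by
        simp only [Set.mem_setOf_eq, hA, Set.mem_iInter, Set.mem_setOf_eq]
        exact forall_congr' fun i => by rw [hpath ω h0 i]
      by_cases h : V ω ∈ A
      · rw [Set.indicator_of_mem (hmem.mpr h), Set.indicator_of_mem h]
        exact hdens ω
      · rw [Set.indicator_of_notMem (fun hc => h (hmem.mp hc)), Set.indicator_of_notMem h]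
    rw [lintegral_congr_ae h1, ← lintegral_map (hFmeas.indicator hAmeas) hVmeas, hVlaw,
      lintegral_indicator hAmeas, ← withDensity_apply _ hAmeas]
  -- right-hand side
  have hsubmeas : Measurable (fun x : Fin m → ℝ => x - δ) :=
    measurable_pi_lambda _ fun r => by simp only [Pi.sub_apply]; fun_prop
  have hAd : MeasurableSet ((fun x : Fin m → ℝ => x - δ) ⁻¹' A) := hAmeas.preimage hsubmeas
  have hRHS : P {ω : Ω | ∀ i, B (t i) ω ≤ b i + θ * max ((t i : ℝ) - u) 0}
      = (Measure.pi fun r => gaussianReal (-(θs r * Δ r)) (Δ r)) A := by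
    have h2 : {ω : Ω | ∀ i, B (t i) ω ≤ b i + θ * max ((t i:ℝ) - u) 0}
        =ᵐ[P] (V ⁻¹' ((fun x : Fin m → ℝ => x - δ) ⁻¹' A) : Set Ω) := by
      rw [Filter.eventuallyEq_set]
      filter_upwards [hB0] with ω h0
      simp only [Set.mem_setOf_eq, Set.mem_preimage, hA, Set.mem_iInter, Set.mem_setOf_eq]
      refine forall_congr' fun i => ?_
      rw [hpath ω h0 i]
      have hsplit : (∑ r, if r.succ ≤ σ i then (V ω - δ) r else 0)
          = (∑ r, if r.succ ≤ σ i then V ω r else 0)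
            - (∑ r, if r.succ ≤ σ i then δ r else 0) := by
        rw [← Finset.sum_sub_distrib]
        refine Finset.sum_congr rfl fun r _ => ?_
        by_cases h : r.succ ≤ σ i <;> simp [h]
      rw [hsplit, hδsum i]
      constructor <;> intro hh <;> linarith
    rw [measure_congr h2, ← Measure.map_apply hVmeas hAd, hVlaw,
      ← Measure.map_apply hsubmeas hAmeas]
    haveI : ∀ r, IsProbabilityMeasure ((gaussianReal 0 (Δ r)).map (fun y => y - δ r)) :=
      fun r => Measure.isProbabilityMeasure_map ((measurable_id.sub_const (δ r)).aemeasurable)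
    have hmp := measurePreserving_pi (f := fun r (y : ℝ) => y - δ r)
      (fun r => gaussianReal 0 (Δ r))
      (fun r => (gaussianReal 0 (Δ r)).map (fun y => y - δ r))
      (fun r => ⟨measurable_id.sub_const (δ r), rfl⟩)
    have hfun : (fun x : Fin m → ℝ => x - δ) = (fun a : Fin m → ℝ => fun r => a r - δ r) := rfl
    rw [hfun, hmp.map_eq]
    have hg : (fun r => (gaussianReal 0 (Δ r)).map (fun y => y - δ r))
        = fun r => gaussianReal (-(θs r * (Δ r : ℝ))) (Δ r) := by
      funext r
      rw [show (fun y : ℝ => y - δ r) = (fun y => y + (-δ r))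
          from funext fun y => sub_eq_add_neg y _, gaussianReal_map_add_const]
      congr 1
      simp [hδ]
    rw [hg]
  rw [hLHS, hRHS, gt_aux_pi_tilt Δ θs]

/-- **Girsanov change of measure producing the tent-shaped drift (Lemma 2.7).**
Let `B` be a standard Brownian motion on `[0,1]` on a probability space `(Ω, 𝓕, P)`.
Fix `τ > 0`, `u ∈ [0,1]`, set `f^u(t) = (u − |u−t|)/2` and
`Y(t) = t τ/8 + (√τ/(2√2)) B_t`. Then for every bounded Borel functional `G` on
`C([0,1], ℝ)` (with the uniform norm),
`E[G(Y) exp((u−1)τ/4 + (√τ/√2)(B_u − B_1))] = E[G((τ/4) f^u + (√τ/(2√2)) B)]`. -/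
theorem girsanov_tent_drift
    {Ω : Type*} [MeasurableSpace Ω] (P : Measure Ω) [IsProbabilityMeasure P]
    (B : ℝ → Ω → ℝ)
    (hBmeas : ∀ t ∈ Icc (0:ℝ) 1, Measurable (B t))
    (hB0 : ∀ᵐ ω ∂P, B 0 ω = 0)
    (hBcont : ∀ᵐ ω ∂P, ContinuousOn (fun t => B t ω) (Icc (0:ℝ) 1))
    (hBindep : ∀ (n : ℕ) (t : Fin (n+1) → ℝ), Monotone t →
      (∀ i, t i ∈ Icc (0:ℝ) 1) →
      iIndepFun (m := fun _ : Fin n => (inferInstance : MeasurableSpace ℝ))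
        (fun i ω => B (t i.succ) ω - B (t i.castSucc) ω) P)
    (hBgauss : ∀ s t : ℝ, 0 ≤ s → s ≤ t → t ≤ 1 →
      P.map (fun ω => B t ω - B s ω) = gaussianReal 0 (Real.toNNReal (t - s)))
    (τ : ℝ) (hτ : 0 < τ) (u : ℝ) (hu : u ∈ Icc (0:ℝ) 1)
    (G : C(Set.Icc (0:ℝ) 1, ℝ) → ℝ)
    (hGmeas : @Measurable _ _ (borel C(Set.Icc (0:ℝ) 1, ℝ)) _ G)
    (hGbdd : ∃ C : ℝ, ∀ x, |G x| ≤ C) :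
    ∫ ω, pathEval G (fun t => t * τ / 8 + (Real.sqrt τ / (2 * Real.sqrt 2)) * B t ω)
        * Real.exp ((u - 1) * τ / 4 + (Real.sqrt τ / Real.sqrt 2) * (B u ω - B 1 ω)) ∂P
      = ∫ ω, pathEval G
          (fun t => (τ / 4) * ((u - |u - t|) / 2)
            + (Real.sqrt τ / (2 * Real.sqrt 2)) * B t ω) ∂P := by
  classical
  letI : MeasurableSpace C(Set.Icc (0:ℝ) 1, ℝ) := borel _
  haveI : BorelSpace C(Set.Icc (0:ℝ) 1, ℝ) := ⟨rfl⟩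
  have hGmeas' : Measurable G := hGmeas
  set θ := Real.sqrt τ / Real.sqrt 2 with hθdef
  set c := Real.sqrt τ / (2 * Real.sqrt 2) with hcdef
  have hsqrt2 : (0:ℝ) < Real.sqrt 2 := Real.sqrt_pos.mpr (by norm_num)
  have hθpos : 0 < θ := div_pos (Real.sqrt_pos.mpr hτ) hsqrt2
  have hcpos : 0 < c := div_pos (Real.sqrt_pos.mpr hτ) (by positivity)
  have hθsq : θ^2 = τ/2 := by
    rw [hθdef, div_pow, Real.sq_sqrt hτ.le, Real.sq_sqrt (by norm_num : (0:ℝ) ≤ 2)]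
  have hcθ : c = θ/2 := by rw [hθdef, hcdef, div_div, mul_comm]
  -- the good set
  have hnull : P {ω | ¬(B 0 ω = 0 ∧ ContinuousOn (fun t => B t ω) (Icc (0:ℝ) 1))} = 0 := by
    have := hB0.and hBcont
    rw [Filter.eventually_iff, mem_ae_iff] at this
    simpa [Set.compl_setOf] using this
  obtain ⟨N, hNsup, hNmeas, hNnull⟩ := exists_measurable_superset_of_null hnull
  set S : Set Ω := Nᶜ with hSdef
  have hSmeas : MeasurableSet S := hNmeas.compl
  have hSae : ∀ᵐ ω ∂P, ω ∈ S := by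
    rw [ae_iff]
    have : {ω | ¬ ω ∈ S} = N := by simp [hSdef]
    rwa [this]
  have hSprop : ∀ ω ∈ S, B 0 ω = 0 ∧ ContinuousOn (fun t => B t ω) (Icc (0:ℝ) 1) := by
    intro ω hω
    by_contra hc
    exact hω (hNsup hc)
  -- the path random variable
  set W : Ω → C(Set.Icc (0:ℝ) 1, ℝ) := fun ω =>
    if h : ω ∈ S then ⟨fun t : Set.Icc (0:ℝ) 1 => B t ω, (hSprop ω h).2.restrict⟩ else 0
    with hW
  have hWeval : ∀ (r : Set.Icc (0:ℝ) 1) (ω : Ω), W ω r = S.indicator (fun ω => B r ω) ω := by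
    intro r ω
    by_cases h : ω ∈ S <;> simp [hW, h, Set.indicator] <;> rfl
  have hWevalmeas : ∀ r : Set.Icc (0:ℝ) 1, Measurable (fun ω => W ω r) := by
    intro r
    have : (fun ω => W ω r) = S.indicator (fun ω => B r ω) := funext (hWeval r)
    rw [this]
    exact ((hBmeas r r.2).indicator hSmeas)
  -- affine images of the path
  set Ψ₁ : Ω → C(Set.Icc (0:ℝ) 1, ℝ) := fun ω =>
    ⟨fun t => (t:ℝ) * τ / 8 + c * (W ω t),
      (((continuous_subtype_val.mul continuous_const).div_const 8).add
        (continuous_const.mul (W ω).continuous))⟩ with hΨ₁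
  set Ψ₂ : Ω → C(Set.Icc (0:ℝ) 1, ℝ) := fun ω =>
    ⟨fun t => (τ / 4) * ((u - |u - (t:ℝ)|) / 2) + c * (W ω t),
      ((continuous_const.mul (((continuous_const.sub
        ((continuous_const.sub continuous_subtype_val).abs)).div_const 2))).add
        (continuous_const.mul (W ω).continuous))⟩ with hΨ₂
  -- measurability via the cylinder σ-algebra
  have hgenle : MeasurableSpace.generateFrom gtCylinders
      ≤ (inferInstance : MeasurableSpace C(Set.Icc (0:ℝ) 1, ℝ)) := le_of_eq gt_borel_eq.symm
  have hcylmeas : ∀ Sset ∈ gtCylinders, MeasurableSet Sset := fun Sset hS =>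
    hgenle _ (MeasurableSpace.measurableSet_generateFrom hS)
  have hmeasofeval : ∀ (F : Ω → C(Set.Icc (0:ℝ) 1, ℝ)),
      (∀ r : Set.Icc (0:ℝ) 1, Measurable fun ω => F ω r) → Measurable F := by
    intro F hF
    have h2 : @Measurable _ _ _ (MeasurableSpace.generateFrom gtCylinders) F := by
      refine measurable_generateFrom ?_
      rintro _ ⟨T, rfl⟩
      have : F ⁻¹' {w | ∀ p ∈ T, w p.1 ≤ p.2} = ⋂ p ∈ T, {ω | F ω p.1 ≤ p.2} := by
        ext ω; simp
      rw [this]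
      exact MeasurableSet.biInter T.countable_toSet fun p _ =>
        measurableSet_le (hF p.1) measurable_const
    exact h2.mono le_rfl (le_of_eq gt_borel_eq)
  have hΨ₁meas : Measurable Ψ₁ := by
    refine hmeasofeval Ψ₁ fun r => ?_
    exact (measurable_const.add ((hWevalmeas r).const_mul c))
  have hΨ₂meas : Measurable Ψ₂ := by
    refine hmeasofeval Ψ₂ fun r => ?_
    exact (measurable_const.add ((hWevalmeas r).const_mul c))
  -- the two laws
  set dens : Ω → ℝ≥0 := fun ω => (Real.exp ((u - 1) * τ / 4 + θ * (B u ω - B 1 ω))).toNNReal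
    with hdens
  have hDmeas : Measurable fun ω => (u - 1) * τ / 4 + θ * (B u ω - B 1 ω) :=
    measurable_const.add (((hBmeas u hu).sub (hBmeas 1 ⟨zero_le_one, le_rfl⟩)).const_mul θ)
  have hdensmeas : Measurable dens := hDmeas.exp.real_toNNReal
  set μ₁ : Measure C(Set.Icc (0:ℝ) 1, ℝ) :=
    (P.withDensity (fun ω => (dens ω : ℝ≥0∞))).map Ψ₁ with hμ₁
  set μ₂ : Measure C(Set.Icc (0:ℝ) 1, ℝ) := P.map Ψ₂ with hμ₂
  haveI : IsProbabilityMeasure μ₂ := Measure.isProbabilityMeasure_map hΨ₂meas.aemeasurable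
  have hexpconv : ∀ ω, (u - 1) * τ / 4 + θ * (B u ω - B 1 ω)
      = -(θ * (B 1 ω - B u ω)) - θ^2 * (1-u)/2 := by
    intro ω; rw [hθsq]; ring
  -- integral identities
  have hL1 : ∫ ω, pathEval G (fun t => t * τ / 8 + c * B t ω)
      * Real.exp ((u - 1) * τ / 4 + θ * (B u ω - B 1 ω)) ∂P = ∫ w, G w ∂μ₁ := by
    rw [hμ₁, integral_map hΨ₁meas.aemeasurable hGmeas'.aestronglyMeasurable,
      integral_withDensity_eq_integral_smul hdensmeas]
    refine integral_congr_ae ?_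
    filter_upwards [hSae] with ω hω
    have hfun1 : (fun t : Set.Icc (0:ℝ) 1 => (t:ℝ) * τ / 8 + c * B (t:ℝ) ω) = ⇑(Ψ₁ ω) := by
      funext t
      simp only [hΨ₁, ContinuousMap.coe_mk, hW, dif_pos hω]
      rfl
    have hc1 : Continuous (fun t : Set.Icc (0:ℝ) 1 => (t:ℝ) * τ / 8 + c * B (t:ℝ) ω) := by
      rw [hfun1]; exact (Ψ₁ ω).continuous
    have hpe : pathEval G (fun t => t * τ / 8 + c * B t ω) = G (Ψ₁ ω) := by
      rw [pathEval, dif_pos hc1]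
      exact congrArg G (DFunLike.coe_injective hfun1)
    rw [hpe, NNReal.smul_def, Real.coe_toNNReal _ (Real.exp_pos _).le, smul_eq_mul, mul_comm]
  have hL2 : ∫ ω, pathEval G (fun t => (τ / 4) * ((u - |u - t|) / 2) + c * B t ω) ∂P
      = ∫ w, G w ∂μ₂ := by
    rw [hμ₂, integral_map hΨ₂meas.aemeasurable hGmeas'.aestronglyMeasurable]
    refine integral_congr_ae ?_
    filter_upwards [hSae] with ω hω
    have hfun2 : (fun t : Set.Icc (0:ℝ) 1 => (τ / 4) * ((u - |u - (t:ℝ)|) / 2) + c * B (t:ℝ) ω)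
        = ⇑(Ψ₂ ω) := by
      funext t
      simp only [hΨ₂, ContinuousMap.coe_mk, hW, dif_pos hω]
      rfl
    have hc2 : Continuous (fun t : Set.Icc (0:ℝ) 1 =>
        (τ / 4) * ((u - |u - (t:ℝ)|) / 2) + c * B (t:ℝ) ω) := by
      rw [hfun2]; exact (Ψ₂ ω).continuous
    rw [pathEval, dif_pos hc2]
    exact congrArg G (DFunLike.coe_injective hfun2)
  -- the key algebraic identity for the two thresholds
  have halg : ∀ (tv a : ℝ), (a - (τ/4) * ((u - |u - tv|)/2))/c
      = (a - tv * τ / 8)/c + θ * max (tv - u) 0 := by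
    intro tv a
    have hτθ : τ = 2 * θ^2 := by rw [hθsq]; ring
    have hθne : θ ≠ 0 := ne_of_gt hθpos
    rcases le_total u tv with h | h
    · rw [abs_of_nonpos (by linarith : u - tv ≤ 0), max_eq_left (by linarith : (0:ℝ) ≤ tv - u),
        hcθ, hτθ]
      field_simp
      ring
    · rw [abs_of_nonneg (by linarith : (0:ℝ) ≤ u - tv), max_eq_right (by linarith : tv - u ≤ 0),
        hcθ, hτθ]
      field_simp
      ring
  -- equality of the two laws on cylinders
  have hcyl : ∀ Sset ∈ gtCylinders, μ₁ Sset = μ₂ Sset := by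
    rintro Sset hSset
    obtain ⟨T, rfl⟩ := hSset
    set k := T.card with hk
    set tt : Fin k → Set.Icc (0:ℝ) 1 := fun i => (T.equivFin.symm i : Set.Icc (0:ℝ) 1 × ℝ).1
      with htt
    set aa : Fin k → ℝ := fun i => (T.equivFin.symm i : Set.Icc (0:ℝ) 1 × ℝ).2 with haa
    set bb : Fin k → ℝ := fun i => (aa i - (tt i : ℝ) * τ / 8) / c with hbb
    have hTiff : ∀ (Q : Set.Icc (0:ℝ) 1 × ℝ → Prop),
        (∀ p ∈ T, Q p) ↔ (∀ i : Fin k, Q (T.equivFin.symm i : Set.Icc (0:ℝ) 1 × ℝ)) := by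
      intro Q
      constructor
      · intro h i; exact h _ (T.equivFin.symm i).2
      · intro h p hp
        have := h (T.equivFin ⟨p, hp⟩)
        simpa using this
    have hcylm : MeasurableSet {w : C(Set.Icc (0:ℝ) 1, ℝ) | ∀ p ∈ T, w p.1 ≤ p.2} :=
      hcylmeas _ ⟨T, rfl⟩
    -- μ₁ of the cylinder
    have h₁ : μ₁ {w | ∀ p ∈ T, w p.1 ≤ p.2}
        = P {ω | ∀ i, B (tt i) ω ≤ bb i + θ * max ((tt i : ℝ) - u) 0} := by
      rw [hμ₁, Measure.map_apply hΨ₁meas hcylm,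
        withDensity_apply _ (hΨ₁meas hcylm), ← lintegral_indicator (hΨ₁meas hcylm)]
      rw [← gt_core P B hBmeas hB0 hBindep hBgauss θ u hu k tt bb]
      refine lintegral_congr_ae ?_
      filter_upwards [hSae] with ω hω
      have hmem : (ω ∈ Ψ₁ ⁻¹' {w | ∀ p ∈ T, w p.1 ≤ p.2})
          ↔ (ω ∈ {ω : Ω | ∀ i, B (tt i) ω ≤ bb i}) := by
        simp only [Set.mem_preimage, Set.mem_setOf_eq]
        rw [hTiff (fun p => Ψ₁ ω p.1 ≤ p.2)]
        refine forall_congr' fun i => ?_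
        have hev : Ψ₁ ω (tt i) = (tt i : ℝ) * τ / 8 + c * B (tt i) ω := by
          simp only [hΨ₁, ContinuousMap.coe_mk, hW, dif_pos hω]
          rfl
        rw [hev, hbb]
        rw [le_div_iff₀ hcpos]
        constructor <;> intro hh <;> nlinarith [hh]
      by_cases h : ω ∈ {ω : Ω | ∀ i, B (tt i) ω ≤ bb i}
      · rw [Set.indicator_of_mem (hmem.mpr h), Set.indicator_of_mem h]
        rw [show ((dens ω : ℝ≥0) : ℝ≥0∞)
            = ENNReal.ofReal (Real.exp ((u-1)*τ/4 + θ*(B u ω - B 1 ω))) from rfl, hexpconv ω]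
      · rw [Set.indicator_of_notMem (fun hcont => h (hmem.mp hcont)),
          Set.indicator_of_notMem h]
    -- μ₂ of the cylinder
    have h₂ : μ₂ {w | ∀ p ∈ T, w p.1 ≤ p.2}
        = P {ω | ∀ i, B (tt i) ω ≤ bb i + θ * max ((tt i : ℝ) - u) 0} := by
      rw [hμ₂, Measure.map_apply hΨ₂meas hcylm]
      refine measure_congr ?_
      rw [Filter.eventuallyEq_set]
      filter_upwards [hSae] with ω hω
      simp only [Set.mem_preimage, Set.mem_setOf_eq]
      rw [hTiff (fun p => Ψ₂ ω p.1 ≤ p.2)]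
      refine forall_congr' fun i => ?_
      have hev : Ψ₂ ω (tt i) = (τ / 4) * ((u - |u - (tt i : ℝ)|) / 2) + c * B (tt i) ω := by
        simp only [hΨ₂, ContinuousMap.coe_mk, hW, dif_pos hω]
        rfl
      rw [hev]
      have : bb i + θ * max ((tt i : ℝ) - u) 0
          = (aa i - (τ/4) * ((u - |u - (tt i : ℝ)|)/2))/c := by
        rw [hbb, halg]
      rw [this, le_div_iff₀ hcpos]
      constructor <;> intro hh <;> nlinarith [hh]
    rw [h₁, h₂]
  -- conclude equality of measures
  haveI : IsFiniteMeasure μ₁ := by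
    constructor
    have huniv : μ₁ Set.univ = μ₂ Set.univ := hcyl Set.univ ⟨∅, by simp⟩
    rw [huniv, measure_univ]
    exact ENNReal.one_lt_top
  have hμeq : μ₁ = μ₂ :=
    MeasureTheory.ext_of_generate_finite gtCylinders gt_borel_eq gt_isPiSystem hcyl
      (hcyl Set.univ ⟨∅, by simp⟩)
  rw [hL1, hL2, hμeq]
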